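/- Let A and Z be n×n complex matrices with Z nonzero and rank-deficient, and suppose A(Im(Z)) ⊆ Im(Z), where Im(Z) is the column space (range) of Z. Then there exists a sequence (Q_j) of invertible n×n complex matrices converging to Z such that sup_j ‖Q_j^{-1} A Q_j‖ < ∞. -/

import Mathlib

open Filter Topology Matrix Module

/-- The Frobenius norm of a complex matrix. -/
noncomputable def frob {n : ℕ} (A : Matrix (Fin n) (Fin n) ℂ) : ℝ :=
  Real.sqrt (∑ i, ∑ j, ‖A i j‖ ^ 2)

lemma frob_continuous {n : ℕ} : Continuous (fun A : Matrix (Fin n) (Fin n) ℂ => frob A) := by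
  apply Real.continuous_sqrt.comp
  apply continuous_finset_sum
  intro i _
  apply continuous_finset_sum
  intro j _
  exact ((continuous_id.matrix_elem i j).norm).pow 2

/-- Extend a basis of a subspace of `ℂⁿ` to a basis of `ℂⁿ` indexed by a sum type. -/
lemma extend_basis_aux {N r : ℕ} (V : Submodule ℂ (Fin N → ℂ)) (bV : Basis (Fin r) ℂ V) :
    ∃ b : Basis (Fin r ⊕ Fin (N - r)) ℂ (Fin N → ℂ),
      (∀ i, b (Sum.inl i) = (bV i : Fin N → ℂ)) ∧
      ∀ v ∈ V, ∀ j, b.repr v (Sum.inr j) = 0 := by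
  obtain ⟨W, hW⟩ := Submodule.exists_isCompl V
  have hVr : Module.finrank ℂ V = r := by
    rw [Module.finrank_eq_card_basis bV, Fintype.card_fin]
  have hle : r ≤ N := by
    rw [← hVr]
    simpa using Submodule.finrank_le V
  have htot : Module.finrank ℂ V + Module.finrank ℂ W = N := by
    rw [Submodule.finrank_add_eq_of_isCompl hW]
    simp
  have hWr : Module.finrank ℂ W = N - r := by omega
  let bW : Basis (Fin (N - r)) ℂ W := Module.finBasisOfFinrankEq ℂ W hWr
  let e := Submodule.prodEquivOfIsCompl V W hW
  refine ⟨(bV.prod bW).map e, ?_, ?_⟩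
  · intro i
    rw [Basis.map_apply]
    have h1 : (bV.prod bW) (Sum.inl i) = (bV i, 0) :=
      Prod.ext (Basis.prod_apply_inl_fst _ _ _) (Basis.prod_apply_inl_snd _ _ _)
    rw [h1]
    show (bV i : Fin N → ℂ) + ((0 : W) : Fin N → ℂ) = _
    simp
  · intro v hv j
    rw [Basis.map_repr]
    have hsymm : e.symm v = (⟨v, hv⟩, 0) :=
      Submodule.prodEquivOfIsCompl_symm_apply_left V W hW (⟨v, hv⟩ : V)
    simp only [LinearEquiv.trans_apply, hsymm]
    rw [Basis.prod_repr_inr]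
    simp

/-- Multiplying by the change-of-basis matrix computes coordinates. -/
lemma toMatrix_mul_apply {N : ℕ} {ι : Type*} [Fintype ι] [DecidableEq ι]
    (b : Basis ι ℂ (Fin N → ℂ)) (u : Fin N → ℂ) (a : ι) :
    ∑ i, b.toMatrix ⇑(Pi.basisFun ℂ (Fin N)) a i * u i = b.repr u a := by
  have hu : u = ∑ i, u i • (Pi.basisFun ℂ (Fin N)) i := by
    conv_lhs => rw [← (Pi.basisFun ℂ (Fin N)).sum_repr u]
    simp
  conv_rhs => rw [hu]
  rw [_root_.map_sum, Finsupp.finset_sum_apply]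
  refine Finset.sum_congr rfl fun i _ => ?_
  rw [_root_.map_smul, Finsupp.smul_apply, smul_eq_mul, Basis.toMatrix_apply]
  ring

lemma toMatrix_mul_entry {N : ℕ} {ι κ : Type*} [Fintype ι] [DecidableEq ι]
    (b : Basis ι ℂ (Fin N → ℂ)) (M : Matrix (Fin N) κ ℂ) (a : ι) (c : κ) :
    (b.toMatrix ⇑(Pi.basisFun ℂ (Fin N)) * M) a c = b.repr (fun i => M i c) a := by
  rw [Matrix.mul_apply]
  exact toMatrix_mul_apply b (fun i => M i c) a

/-- The block diagonal matrix `diag(1, ε • 1)`. -/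
noncomputable def Emat (p q : ℕ) (ε : ℂ) : Matrix (Fin p ⊕ Fin q) (Fin p ⊕ Fin q) ℂ :=
  Matrix.fromBlocks 1 0 0 (ε • 1)

lemma Emat_mul (p q : ℕ) (ε δ : ℂ) : Emat p q ε * Emat p q δ = Emat p q (ε * δ) := by
  unfold Emat
  rw [Matrix.fromBlocks_multiply]
  congr 1 <;> simp [smul_smul, mul_comm]

lemma Emat_one (p q : ℕ) : Emat p q 1 = 1 := by
  unfold Emat
  rw [one_smul, Matrix.fromBlocks_one]

lemma Emat_split (p q : ℕ) (ε : ℂ) :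
    Emat p q ε = Emat p q 0 + ε • Matrix.fromBlocks 0 0 0 1 := by
  unfold Emat
  rw [Matrix.fromBlocks_smul, Matrix.fromBlocks_add]
  congr 1 <;> simp

lemma Emat_conj (p q : ℕ) (G : Matrix (Fin p ⊕ Fin q) (Fin p ⊕ Fin q) ℂ)
    (hG : G.toBlocks₂₁ = 0) (ε : ℂ) (hε : ε ≠ 0) :
    Emat p q ε⁻¹ * G * Emat p q ε =
      Matrix.fromBlocks G.toBlocks₁₁ (ε • G.toBlocks₁₂) 0 G.toBlocks₂₂ := by
  conv_lhs => rw [← Matrix.fromBlocks_toBlocks G, hG]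
  unfold Emat
  rw [Matrix.fromBlocks_multiply, Matrix.fromBlocks_multiply]
  congr 1 <;> simp [Matrix.smul_mul, Matrix.mul_smul, smul_smul, inv_mul_cancel₀ hε,
    mul_inv_cancel₀ hε]

/-- if `Z ≠ 0` is rank-deficient and the range of `Z` is an invariant
subspace of `A`, then there is a sequence of invertible matrices `Q_j → Z` along
which `‖Q_j⁻¹ A Q_j‖` stays bounded. -/
theorem exists_seq_frob_conj_bounded {n : ℕ} (A Z : Matrix (Fin n) (Fin n) ℂ)
    (hZ0 : Z ≠ 0) (hZr : Z.rank < n)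
    (hAZ : ∀ x ∈ LinearMap.range Z.mulVecLin, A.mulVec x ∈ LinearMap.range Z.mulVecLin) :
    ∃ Q : ℕ → Matrix (Fin n) (Fin n) ℂ,
      (∀ j, IsUnit (Q j)) ∧ Tendsto Q atTop (𝓝 Z) ∧
      ∃ C : ℝ, ∀ j, frob ((Q j)⁻¹ * A * Q j) ≤ C := by
  classical
  set r := Z.rank with hr
  set V : Submodule ℂ (Fin n → ℂ) := LinearMap.range Z.mulVecLin with hVdef
  have hVr : Module.finrank ℂ V = r := rfl
  let bV : Basis (Fin r) ℂ V := Module.finBasisOfFinrankEq ℂ V hVr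
  obtain ⟨b, hb1, hb2⟩ := extend_basis_aux V bV
  -- change of basis matrices
  set S : Matrix (Fin n) (Fin r ⊕ Fin (n - r)) ℂ := (Pi.basisFun ℂ (Fin n)).toMatrix ⇑b with hSdef
  set P : Matrix (Fin r ⊕ Fin (n - r)) (Fin n) ℂ := b.toMatrix ⇑(Pi.basisFun ℂ (Fin n)) with hPdef
  have hPS : P * S = 1 := Basis.toMatrix_mul_toMatrix_flip _ _
  have hSP : S * P = 1 := Basis.toMatrix_mul_toMatrix_flip _ _
  have hScol : ∀ a j, S j a = b a j := by
    intro a j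
    rw [hSdef, Basis.toMatrix_apply]
    simp
  -- G = P A S is block upper triangular
  set G : Matrix (Fin r ⊕ Fin (n - r)) (Fin r ⊕ Fin (n - r)) ℂ := P * (A * S) with hGdef
  have hG21 : G.toBlocks₂₁ = 0 := by
    ext k i
    show G (Sum.inr k) (Sum.inl i) = 0
    rw [hGdef, toMatrix_mul_entry]
    have hcol : (fun l => (A * S) l (Sum.inl i)) = A.mulVec (b (Sum.inl i)) := by
      funext l
      rw [Matrix.mul_apply, Matrix.mulVec, dotProduct]
      exact Finset.sum_congr rfl fun j _ => by rw [hScol]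
    rw [hcol]
    exact hb2 _ (hAZ _ (by rw [hb1]; exact (bV i).2)) k
  -- N = P Z has zero lower rows
  set Nm : Matrix (Fin r ⊕ Fin (n - r)) (Fin n) ℂ := P * Z with hNdef
  have hNlow : ∀ k j, Nm (Sum.inr k) j = 0 := by
    intro k j
    rw [hNdef, toMatrix_mul_entry]
    have hcol : (fun i => Z i j) = Z.mulVec (Pi.single j 1) := by
      rw [Matrix.mulVec_single_one]; rfl
    rw [hcol]
    exact hb2 _ ⟨Pi.single j 1, rfl⟩ k
  have hSN : S * Nm = Z := by
    rw [hNdef, ← Matrix.mul_assoc, hSP, Matrix.one_mul]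
  -- rank of N is r
  have hNrank : Nm.rank = r := by
    refine le_antisymm ?_ ?_
    · exact Matrix.rank_mul_le_right P Z
    · have h := Matrix.rank_mul_le_right S Nm
      rwa [hSN] at h
  -- the top rows of N are linearly independent
  set u : Fin r → (Fin n → ℂ) := fun i => Nm (Sum.inl i) with hudef
  have hspan : Submodule.span ℂ (Set.range u) = Submodule.span ℂ (Set.range Nm) := by
    apply le_antisymm
    · apply Submodule.span_mono
      rintro _ ⟨i, rfl⟩
      exact ⟨Sum.inl i, rfl⟩
    · rw [Submodule.span_le]
      rintro _ ⟨a, rfl⟩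
      cases a with
      | inl i => exact Submodule.subset_span ⟨i, rfl⟩
      | inr k =>
        have : Nm (Sum.inr k) = 0 := funext fun j => hNlow k j
        rw [this]
        exact Submodule.zero_mem _
  have hu : LinearIndependent ℂ u := by
    rw [linearIndependent_iff_card_eq_finrank_span]
    rw [Fintype.card_fin, Set.finrank, hspan]
    exact hNrank.symm.trans (Matrix.rank_eq_finrank_span_row Nm)
  let bU : Basis (Fin r) ℂ (Submodule.span ℂ (Set.range u)) := Basis.span hu
  obtain ⟨c, hc1, _⟩ := extend_basis_aux (Submodule.span ℂ (Set.range u)) bU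
  set T : Matrix (Fin r ⊕ Fin (n - r)) (Fin n) ℂ :=
    ((Pi.basisFun ℂ (Fin n)).toMatrix ⇑c)ᵀ with hTdef
  set T' : Matrix (Fin n) (Fin r ⊕ Fin (n - r)) ℂ :=
    (c.toMatrix ⇑(Pi.basisFun ℂ (Fin n)))ᵀ with hT'def
  have hTT' : T * T' = 1 := by
    rw [hTdef, hT'def, ← Matrix.transpose_mul, Basis.toMatrix_mul_toMatrix_flip,
      Matrix.transpose_one]
  have hT'T : T' * T = 1 := by
    rw [hTdef, hT'def, ← Matrix.transpose_mul, Basis.toMatrix_mul_toMatrix_flip,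
      Matrix.transpose_one]
  have hTrow : ∀ i, T (Sum.inl i) = u i := by
    intro i
    funext j
    show ((Pi.basisFun ℂ (Fin n)).toMatrix ⇑c) j (Sum.inl i) = u i j
    rw [Basis.toMatrix_apply]
    simp only [Pi.basisFun_repr, hc1 i]
    rw [show ((bU i : Fin n → ℂ)) = u i from congrArg Subtype.val (Basis.span_apply hu i)]
  -- Emat 0 * T = N
  have hE0T : Emat r (n - r) 0 * T = Nm := by
    ext a j
    cases a with
    | inl i =>
      rw [Matrix.mul_apply, Fintype.sum_sum_type]
      simp only [Emat, Matrix.fromBlocks_apply₁₁, Matrix.fromBlocks_apply₁₂,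
        Matrix.zero_apply, zero_mul, Finset.sum_const_zero, add_zero]
      simp [Matrix.one_apply, hTrow i, hudef]
    | inr k =>
      rw [Matrix.mul_apply, Fintype.sum_sum_type]
      simp [Emat, hNlow k j]
  -- the approximating family
  set Rm : Matrix (Fin n) (Fin n) ℂ :=
    S * (Matrix.fromBlocks 0 0 0 1 : Matrix (Fin r ⊕ Fin (n - r)) (Fin r ⊕ Fin (n - r)) ℂ) * T with hRdef
  have hQsplit : ∀ ε : ℂ, S * Emat r (n - r) ε * T = Z + ε • Rm := by
    intro ε
    rw [Emat_split, Matrix.mul_add, Matrix.add_mul, Matrix.mul_smul, Matrix.smul_mul]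
    congr 1
    rw [Matrix.mul_assoc, hE0T, hSN]
  -- the conjugated family
  set M0 : Matrix (Fin n) (Fin n) ℂ :=
    T' * Matrix.fromBlocks G.toBlocks₁₁ 0 0 G.toBlocks₂₂ * T with hM0def
  set M1 : Matrix (Fin n) (Fin n) ℂ :=
    T' * (Matrix.fromBlocks 0 G.toBlocks₁₂ 0 0 : Matrix (Fin r ⊕ Fin (n - r)) (Fin r ⊕ Fin (n - r)) ℂ) * T with hM1def
  have hconj : ∀ ε : ℂ, ε ≠ 0 →
      (S * Emat r (n - r) ε * T)⁻¹ * A * (S * Emat r (n - r) ε * T) = M0 + ε • M1 := by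
    intro ε hε
    have hinv : (S * Emat r (n - r) ε * T) * (T' * Emat r (n - r) ε⁻¹ * P) = 1 := by
      calc S * Emat r (n - r) ε * T * (T' * Emat r (n - r) ε⁻¹ * P)
          = S * (Emat r (n - r) ε * ((T * T') * (Emat r (n - r) ε⁻¹ * P))) := by
            simp only [Matrix.mul_assoc]
        _ = 1 := by
            rw [hTT', Matrix.one_mul, ← Matrix.mul_assoc (Emat r (n - r) ε),
              Emat_mul, mul_inv_cancel₀ hε, Emat_one, Matrix.one_mul, hSP]
    rw [Matrix.inv_eq_right_inv hinv]
    have hmid : Emat r (n - r) ε⁻¹ * G * Emat r (n - r) ε =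
        Matrix.fromBlocks G.toBlocks₁₁ (ε • G.toBlocks₁₂) 0 G.toBlocks₂₂ :=
      Emat_conj _ _ G hG21 ε hε
    have hblocksplit :
        Matrix.fromBlocks G.toBlocks₁₁ (ε • G.toBlocks₁₂) 0 G.toBlocks₂₂ =
          Matrix.fromBlocks G.toBlocks₁₁ 0 0 G.toBlocks₂₂
            + ε • Matrix.fromBlocks 0 G.toBlocks₁₂ 0 0 := by
      rw [Matrix.fromBlocks_smul, Matrix.fromBlocks_add]
      congr 1 <;> simp
    calc T' * Emat r (n - r) ε⁻¹ * P * A * (S * Emat r (n - r) ε * T)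
        = T' * ((Emat r (n - r) ε⁻¹ * (P * (A * S))) * (Emat r (n - r) ε * T)) := by
          simp only [Matrix.mul_assoc]
      _ = T' * ((Emat r (n - r) ε⁻¹ * G * Emat r (n - r) ε) * T) := by
          rw [hGdef]; simp only [Matrix.mul_assoc]
      _ = T' * (Matrix.fromBlocks G.toBlocks₁₁ 0 0 G.toBlocks₂₂
            + ε • Matrix.fromBlocks 0 G.toBlocks₁₂ 0 0) * T := by
          rw [hmid, hblocksplit, Matrix.mul_assoc]
      _ = M0 + ε • M1 := by
          rw [Matrix.mul_add, Matrix.add_mul, Matrix.mul_smul, Matrix.smul_mul,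
            hM0def, hM1def]
  -- the sequence
  set ε : ℕ → ℂ := fun j => ((1 / ((j : ℝ) + 1) : ℝ) : ℂ) with hεdef
  have hεne : ∀ j, ε j ≠ 0 := by
    intro j
    simp only [hεdef]
    rw [Ne, Complex.ofReal_eq_zero]
    positivity
  have hεlim : Tendsto ε atTop (𝓝 0) := by
    rw [hεdef, show (0 : ℂ) = ((0 : ℝ) : ℂ) by simp]
    exact (Complex.continuous_ofReal.tendsto 0).comp tendsto_one_div_add_atTop_nhds_zero_nat
  refine ⟨fun j => S * Emat r (n - r) (ε j) * T, ?_, ?_, ?_⟩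
  · intro j
    have hinv1 : (S * Emat r (n - r) (ε j) * T) * (T' * Emat r (n - r) (ε j)⁻¹ * P) = 1 := by
      calc S * Emat r (n - r) (ε j) * T * (T' * Emat r (n - r) (ε j)⁻¹ * P)
          = S * (Emat r (n - r) (ε j) * ((T * T') * (Emat r (n - r) (ε j)⁻¹ * P))) := by
            simp only [Matrix.mul_assoc]
        _ = 1 := by
            rw [hTT', Matrix.one_mul, ← Matrix.mul_assoc (Emat r (n - r) (ε j)),
              Emat_mul, mul_inv_cancel₀ (hεne j), Emat_one, Matrix.one_mul, hSP]
    exact ⟨⟨_, _, hinv1, mul_eq_one_comm.mp hinv1⟩, rfl⟩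
  · -- tendsto
    have : ∀ j, S * Emat r (n - r) (ε j) * T = Z + ε j • Rm := fun j => hQsplit (ε j)
    simp only [this]
    have h0 : Tendsto (fun j => ε j • Rm) atTop (𝓝 (0 : Matrix (Fin n) (Fin n) ℂ)) := by
      have := hεlim.smul_const Rm
      rwa [zero_smul] at this
    have := (tendsto_const_nhds : Tendsto (fun _ : ℕ => Z) atTop (𝓝 Z)).add h0
    simpa using this
  · -- boundedness
    have heq : ∀ j, (S * Emat r (n - r) (ε j) * T)⁻¹ * A * (S * Emat r (n - r) (ε j) * T)
        = M0 + ε j • M1 := fun j => hconj (ε j) (hεne j)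
    have hlim : Tendsto (fun j => frob (M0 + ε j • M1)) atTop (𝓝 (frob M0)) := by
      have h0 : Tendsto (fun j => ε j • M1) atTop (𝓝 (0 : Matrix (Fin n) (Fin n) ℂ)) := by
        have := hεlim.smul_const M1
        rwa [zero_smul] at this
      have h1 : Tendsto (fun j => M0 + ε j • M1) atTop (𝓝 M0) := by
        have := (tendsto_const_nhds : Tendsto (fun _ : ℕ => M0) atTop (𝓝 M0)).add h0
        simpa using this
      exact (frob_continuous.tendsto M0).comp h1
    obtain ⟨C, hC⟩ := hlim.bddAbove_range
    refine ⟨C, fun j => ?_⟩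
    rw [heq j]
    exact hC ⟨j, rfl⟩
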